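/- Let 1 ≤ κ ≤ N and set K̃ := κ + L_κ · ∑_{j=κ+1}^{N} 1/L_j. The function K ↦ V(κ,K,L) is nondecreasing on [0,∞), strictly increasing on [0, K̃], and constant equal to ∑_{i=1}^{κ} L_i on [K̃, ∞); in particular V(κ,K,L) < ∑_{i=1}^{κ} L_i whenever 0 ≤ K < K̃. -/

import Mathlib

open Finset

/-- The inner minimum `𝒱(c; κ, L)`: the minimum over subsets `U ⊆ {1,…,N}` with `|U| = κ`
of `∑_{i ∈ U} c_i L_i`. -/
noncomputable def Vmin (N κ : ℕ) (L c : ℕ → ℝ) : ℝ :=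
  sInf {x : ℝ | ∃ U : Finset ℕ, U ⊆ Finset.Icc 1 N ∧ U.card = κ ∧ x = ∑ i ∈ U, c i * L i}

/-- Membership in the constraint set `D_N(K) = {c ∈ [0,1]^N : ∑_{i=1}^N c_i ≤ K}`. -/
def Dmem (N : ℕ) (K : ℝ) (c : ℕ → ℝ) : Prop :=
  (∀ i ∈ Finset.Icc 1 N, 0 ≤ c i ∧ c i ≤ 1) ∧ (∑ i ∈ Finset.Icc 1 N, c i) ≤ K

/-- The max–min value `V(κ, K, L) = sup_{c ∈ D_N(K)} 𝒱(c; κ, L)`. -/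
noncomputable def Vval (N κ : ℕ) (K : ℝ) (L : ℕ → ℝ) : ℝ :=
  sSup {v : ℝ | ∃ c : ℕ → ℝ, Dmem N K c ∧ v = Vmin N κ L c}

set_option linter.unusedSectionVars false

namespace Stmt6

def S (N κ : ℕ) (L c : ℕ → ℝ) : Set ℝ :=
  {x : ℝ | ∃ U : Finset ℕ, U ⊆ Finset.Icc 1 N ∧ U.card = κ ∧ x = ∑ i ∈ U, c i * L i}

lemma vmin_eq (N κ : ℕ) (L c : ℕ → ℝ) : Vmin N κ L c = sInf (S N κ L c) := rfl

lemma cardIcc (κ : ℕ) : (Finset.Icc 1 κ).card = κ := by rw [Nat.card_Icc]; omega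

lemma S_nonempty (N κ : ℕ) (hκN : κ ≤ N) (L c : ℕ → ℝ) : (S N κ L c).Nonempty :=
  ⟨_, Finset.Icc 1 κ, Finset.Icc_subset_Icc_right hκN, cardIcc κ, rfl⟩

lemma S_bddBelow (N κ : ℕ) (L c : ℕ → ℝ)
    (hc : ∀ i ∈ Finset.Icc 1 N, 0 ≤ c i) (hL : ∀ i ∈ Finset.Icc 1 N, 0 < L i) :
    BddBelow (S N κ L c) := by
  refine ⟨0, fun x hx => ?_⟩
  obtain ⟨U, hU, hcard, rfl⟩ := hx
  exact Finset.sum_nonneg fun i hi =>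
    mul_nonneg (hc i (hU hi)) (hL i (hU hi)).le

lemma vmin_le_elem (N κ : ℕ) (L c : ℕ → ℝ)
    (hc : ∀ i ∈ Finset.Icc 1 N, 0 ≤ c i) (hL : ∀ i ∈ Finset.Icc 1 N, 0 < L i)
    (U : Finset ℕ) (hU : U ⊆ Finset.Icc 1 N) (hcard : U.card = κ) :
    Vmin N κ L c ≤ ∑ i ∈ U, c i * L i :=
  csInf_le (S_bddBelow N κ L c hc hL) ⟨U, hU, hcard, rfl⟩

/-- `Icc 1 κ` minimizes sums of a monotone function over κ-subsets. -/
lemma sum_Icc_le_sum_subset (N : ℕ) (g : ℕ → ℝ)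
    (hg : ∀ i j, 1 ≤ i → i ≤ j → j ≤ N → g i ≤ g j) :
    ∀ (κ : ℕ) (U : Finset ℕ), U ⊆ Finset.Icc 1 N → U.card = κ →
      ∑ i ∈ Finset.Icc 1 κ, g i ≤ ∑ i ∈ U, g i := by
  intro κ
  induction κ with
  | zero => intro U hU hcard; simp [Finset.card_eq_zero.mp hcard]
  | succ k ih =>
    intro U hU hcard
    have hne : U.Nonempty := Finset.card_pos.mp (by omega)
    have hmU : U.max' hne ∈ U := U.max'_mem hne
    set m := U.max' hne with hm
    have hmN : m ∈ Finset.Icc 1 N := hU hmU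
    have hm1 : 1 ≤ m := (Finset.mem_Icc.mp hmN).1
    have hmN' : m ≤ N := (Finset.mem_Icc.mp hmN).2
    have hUsub : U ⊆ Finset.Icc 1 m := fun u hu =>
      Finset.mem_Icc.mpr ⟨(Finset.mem_Icc.mp (hU hu)).1, U.le_max' u hu⟩
    have hkm : k + 1 ≤ m := by
      have := Finset.card_le_card hUsub
      rw [hcard, Nat.card_Icc] at this; omega
    have herase : (U.erase m).card = k := by
      rw [Finset.card_erase_of_mem hmU, hcard]; omega
    have h1 := ih (U.erase m) (fun u hu => hU (Finset.mem_of_mem_erase hu)) herase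
    have h2 : g (k + 1) ≤ g m := hg (k + 1) m (by omega) hkm hmN'
    calc ∑ i ∈ Finset.Icc 1 (k + 1), g i
        = ∑ i ∈ Finset.Icc 1 k, g i + g (k + 1) := Finset.sum_Icc_succ_top (by omega) g
      _ ≤ ∑ i ∈ U.erase m, g i + g m := add_le_add h1 h2
      _ = ∑ i ∈ U, g i := Finset.sum_erase_add U g hmU

lemma split_sum (N κ : ℕ) (hκN : κ ≤ N) (f : ℕ → ℝ) :
    ∑ i ∈ Finset.Icc 1 N, f i
      = ∑ i ∈ Finset.Icc 1 κ, f i + ∑ i ∈ Finset.Icc (κ + 1) N, f i := by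
  rw [show (1:ℕ) = 0 + 1 from rfl, Finset.Icc_add_one_left_eq_Ioc, Finset.Icc_add_one_left_eq_Ioc, show κ + (0 + 1) = κ + 1 from rfl, Finset.Icc_add_one_left_eq_Ioc,
    Finset.sum_Ioc_consecutive f (Nat.zero_le κ) hκN]


noncomputable def cstar (κ : ℕ) (L : ℕ → ℝ) : ℕ → ℝ :=
  fun i => if i ≤ κ then 1 else L κ * (L i)⁻¹

section Cstar
variable (N : ℕ) (L : ℕ → ℝ) (κ : ℕ)
variable (hLpos : ∀ i ∈ Finset.Icc 1 N, 0 < L i)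
variable (hLmono : ∀ i j : ℕ, 1 ≤ i → i ≤ j → j ≤ N → L i ≤ L j)
variable (hκ1 : 1 ≤ κ) (hκN : κ ≤ N)

include hLpos hLmono hκ1 hκN

lemma cstar_bounds : ∀ i ∈ Finset.Icc 1 N, 0 ≤ cstar κ L i ∧ cstar κ L i ≤ 1 := by
  intro i hi
  obtain ⟨hi1, hiN⟩ := Finset.mem_Icc.mp hi
  unfold cstar
  by_cases h : i ≤ κ
  · simp [h]
  · simp only [h, if_false]
    have hLκ : 0 < L κ := hLpos κ (Finset.mem_Icc.mpr ⟨hκ1, hκN⟩)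
    have hLi : 0 < L i := hLpos i hi
    constructor
    · positivity
    · rw [mul_inv_le_iff₀ hLi, one_mul]
      exact hLmono κ i hκ1 (by omega) hiN

lemma cstar_budget :
    ∑ i ∈ Finset.Icc 1 N, cstar κ L i
      = (κ : ℝ) + L κ * ∑ j ∈ Finset.Icc (κ + 1) N, (L j)⁻¹ := by
  rw [split_sum N κ hκN]
  congr 1
  · have h1 : ∀ i ∈ Finset.Icc 1 κ, cstar κ L i = 1 := fun i hi => by
      simp [cstar, (Finset.mem_Icc.mp hi).2]
    rw [Finset.sum_congr rfl h1, Finset.sum_const, cardIcc]; simp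
  · rw [Finset.mul_sum, Finset.sum_congr rfl (fun j hj => ?_)]
    have := (Finset.mem_Icc.mp hj).1
    simp [cstar, show ¬ (j ≤ κ) by omega]

lemma cstar_prod : ∀ i ∈ Finset.Icc 1 N, cstar κ L i * L i
    = if i ≤ κ then L i else L κ := by
  intro i hi
  have hLi := hLpos i hi
  by_cases h : i ≤ κ <;> simp [cstar, h]
  field_simp

lemma gstar_mono : ∀ i j : ℕ, 1 ≤ i → i ≤ j → j ≤ N →
    (if i ≤ κ then L i else L κ) ≤ (if j ≤ κ then L j else L κ) := by
  intro i j h1 hij hjN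
  by_cases hi : i ≤ κ <;> by_cases hj : j ≤ κ
  · simp only [hi, hj, if_true]; exact hLmono i j h1 hij (by omega)
  · simp only [hi, hj, if_true, if_false]; exact hLmono i κ h1 hi hκN
  · omega
  · simp [hi, hj]

lemma vmin_cstar : Vmin N κ L (cstar κ L) = ∑ i ∈ Finset.Icc 1 κ, L i := by
  rw [vmin_eq]
  have hbdd : BddBelow (S N κ L (cstar κ L)) :=
    S_bddBelow N κ L _ (fun i hi => (cstar_bounds N L κ hLpos hLmono hκ1 hκN i hi).1) hLpos
  apply le_antisymm
  · have h0 : ∑ i ∈ Finset.Icc 1 κ, cstar κ L i * L i = ∑ i ∈ Finset.Icc 1 κ, L i := by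
      refine Finset.sum_congr rfl fun i hi => ?_
      have := (Finset.mem_Icc.mp hi).2
      simp [cstar, this]
    calc sInf (S N κ L (cstar κ L)) ≤ ∑ i ∈ Finset.Icc 1 κ, cstar κ L i * L i :=
          csInf_le hbdd ⟨Finset.Icc 1 κ, Finset.Icc_subset_Icc_right hκN, cardIcc κ, rfl⟩
      _ = _ := h0
  · apply le_csInf (S_nonempty N κ hκN L _)
    rintro x ⟨U, hU, hcard, rfl⟩
    have h1 : ∑ i ∈ U, cstar κ L i * L i = ∑ i ∈ U, (if i ≤ κ then L i else L κ) :=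
      Finset.sum_congr rfl fun i hi => cstar_prod N L κ hLpos hLmono hκ1 hκN i (hU hi)
    have h2 : ∑ i ∈ Finset.Icc 1 κ, L i
        = ∑ i ∈ Finset.Icc 1 κ, (if i ≤ κ then L i else L κ) := by
      refine Finset.sum_congr rfl fun i hi => ?_
      have := (Finset.mem_Icc.mp hi).2
      simp [this]
    rw [h1, h2]
    exact sum_Icc_le_sum_subset N _ (gstar_mono N L κ hLpos hLmono hκ1 hκN) κ U hU hcard

end Cstar

def VS (N κ : ℕ) (K : ℝ) (L : ℕ → ℝ) : Set ℝ :=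
  {v : ℝ | ∃ c : ℕ → ℝ, Dmem N K c ∧ v = Vmin N κ L c}

lemma vval_eq (N κ : ℕ) (K : ℝ) (L : ℕ → ℝ) : Vval N κ K L = sSup (VS N κ K L) := rfl

lemma VS_nonempty (N κ : ℕ) (K : ℝ) (L : ℕ → ℝ) (hK : 0 ≤ K) : (VS N κ K L).Nonempty :=
  ⟨_, fun _ => 0, ⟨fun i _ => by norm_num, by simpa using hK⟩, rfl⟩

lemma VS_le (N κ : ℕ) (K : ℝ) (L : ℕ → ℝ)
    (hLpos : ∀ i ∈ Finset.Icc 1 N, 0 < L i) (hκN : κ ≤ N) :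
    ∀ v ∈ VS N κ K L, v ≤ ∑ i ∈ Finset.Icc 1 κ, L i := by
  rintro v ⟨c, ⟨hc01, _⟩, rfl⟩
  calc Vmin N κ L c ≤ ∑ i ∈ Finset.Icc 1 κ, c i * L i :=
        vmin_le_elem N κ L c (fun i hi => (hc01 i hi).1) hLpos _
          (Finset.Icc_subset_Icc_right hκN) (cardIcc κ)
    _ ≤ ∑ i ∈ Finset.Icc 1 κ, L i := by
        refine Finset.sum_le_sum fun i hi => ?_
        have hi' : i ∈ Finset.Icc 1 N := Finset.Icc_subset_Icc_right hκN hi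
        have := hLpos i hi'
        nlinarith [(hc01 i hi').2, (hc01 i hi').1]

lemma VS_bddAbove (N κ : ℕ) (K : ℝ) (L : ℕ → ℝ)
    (hLpos : ∀ i ∈ Finset.Icc 1 N, 0 < L i) (hκN : κ ≤ N) :
    BddAbove (VS N κ K L) :=
  ⟨_, VS_le N κ K L hLpos hκN⟩


section Main
variable (N : ℕ) (hN : 1 ≤ N) (L : ℕ → ℝ)
variable (hLpos : ∀ i ∈ Finset.Icc 1 N, 0 < L i)
variable (hLmono : ∀ i j : ℕ, 1 ≤ i → i ≤ j → j ≤ N → L i ≤ L j)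
variable (κ : ℕ) (hκ1 : 1 ≤ κ) (hκN : κ ≤ N)

include hN hLpos hLmono hκ1 hκN

lemma part4 (K : ℝ) (hK0 : 0 ≤ K)
    (hK : K < (κ : ℝ) + L κ * ∑ j ∈ Finset.Icc (κ + 1) N, (L j)⁻¹) :
    Vval N κ K L < ∑ i ∈ Finset.Icc 1 κ, L i := by
  set T := ∑ i ∈ Finset.Icc 1 κ, L i with hT
  set Kt := (κ : ℝ) + L κ * ∑ j ∈ Finset.Icc (κ + 1) N, (L j)⁻¹ with hKt
  set A := ∑ i ∈ Finset.Icc 1 N, (L i)⁻¹ with hA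
  have hApos : 0 < A :=
    Finset.sum_pos (fun i hi => inv_pos.mpr (hLpos i hi))
      ⟨1, Finset.mem_Icc.mpr ⟨le_refl 1, hN⟩⟩
  set ε := (Kt - K) / (2 * A) with hε
  have hεpos : 0 < ε := div_pos (by linarith) (by linarith)
  have hεA : 2 * (ε * A) = Kt - K := by
    rw [hε]; field_simp
  clear_value T Kt A ε
  have key : ∀ c : ℕ → ℝ, Dmem N K c → Vmin N κ L c ≤ T - ε := by
    rintro c ⟨hc01, hcsum⟩
    by_contra hcon
    push_neg at hcon
    have hbb : BddBelow (S N κ L c) :=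
      S_bddBelow N κ L c (fun i hi => (hc01 i hi).1) hLpos
    have helem : ∀ U : Finset ℕ, U ⊆ Finset.Icc 1 N → U.card = κ →
        T - ε < ∑ i ∈ U, c i * L i := fun U h1 h2 =>
      lt_of_lt_of_le hcon (csInf_le hbb ⟨U, h1, h2, rfl⟩)
    -- Step 1 : on Icc 1 κ, c i is close to 1
    have hsum1 : ∑ j ∈ Finset.Icc 1 κ, (1 - c j) * L j < ε := by
      have h := helem (Finset.Icc 1 κ) (Finset.Icc_subset_Icc_right hκN) (cardIcc κ)
      have heq : ∑ j ∈ Finset.Icc 1 κ, (1 - c j) * L j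
          = T - ∑ j ∈ Finset.Icc 1 κ, c j * L j := by
        rw [hT, ← Finset.sum_sub_distrib]
        exact Finset.sum_congr rfl fun j hj => by ring
      linarith
    have hterm1 : ∀ i ∈ Finset.Icc 1 κ, (1 - c i) * L i < ε := by
      intro i hi
      refine lt_of_le_of_lt
        (Finset.single_le_sum (f := fun j => (1 - c j) * L j) (fun j hj => ?_) hi) hsum1
      have hjN : j ∈ Finset.Icc 1 N := Finset.Icc_subset_Icc_right hκN hj
      exact mul_nonneg (by linarith [(hc01 j hjN).2]) (hLpos j hjN).le
    have hstep1 : ∀ i ∈ Finset.Icc 1 κ, 1 - ε * (L i)⁻¹ ≤ c i := by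
      intro i hi
      have hiN : i ∈ Finset.Icc 1 N := Finset.Icc_subset_Icc_right hκN hi
      have hLi := hLpos i hiN
      have h := (lt_div_iff₀ hLi).mpr (hterm1 i hi)
      rw [div_eq_mul_inv] at h
      linarith
    -- Step 2 : on Icc (κ+1) N, c j is at least roughly L κ / L j
    have hstep2 : ∀ j ∈ Finset.Icc (κ + 1) N,
        L κ * (L j)⁻¹ - ε * (L j)⁻¹ ≤ c j := by
      intro j hj
      obtain ⟨hj1, hjN⟩ := Finset.mem_Icc.mp hj
      have hjN' : j ∈ Finset.Icc 1 N := Finset.mem_Icc.mpr ⟨by omega, hjN⟩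
      have hLj := hLpos j hjN'
      have hκmem : κ ∈ Finset.Icc 1 κ := Finset.mem_Icc.mpr ⟨hκ1, le_refl κ⟩
      set E := (Finset.Icc 1 κ).erase κ with hE
      have hjE : j ∉ E := by
        intro hmem
        have := (Finset.mem_Icc.mp (Finset.mem_of_mem_erase hmem)).2
        omega
      have hsub : insert j E ⊆ Finset.Icc 1 N := by
        refine Finset.insert_subset hjN' ?_
        exact fun u hu => Finset.Icc_subset_Icc_right hκN (Finset.mem_of_mem_erase hu)
      have hcard : (insert j E).card = κ := by
        rw [Finset.card_insert_of_notMem hjE, hE, Finset.card_erase_of_mem hκmem, cardIcc]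
        omega
      have h := helem _ hsub hcard
      rw [Finset.sum_insert hjE] at h
      have hEle : ∑ i ∈ E, c i * L i ≤ ∑ i ∈ E, L i := by
        refine Finset.sum_le_sum fun i hi => ?_
        have hiN : i ∈ Finset.Icc 1 N :=
          Finset.Icc_subset_Icc_right hκN (Finset.mem_of_mem_erase hi)
        nlinarith [(hc01 i hiN).2, hLpos i hiN]
      have hTsplit : ∑ i ∈ E, L i + L κ = T := by rw [hT]; exact Finset.sum_erase_add _ _ hκmem
      have h2 : L κ - ε < c j * L j := by linarith
      have h3 := (div_lt_iff₀ hLj).mpr h2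
      rw [div_eq_mul_inv, sub_mul] at h3
      linarith
    -- combine budgets
    have hb1 : (κ : ℝ) - ε * ∑ i ∈ Finset.Icc 1 κ, (L i)⁻¹ ≤ ∑ i ∈ Finset.Icc 1 κ, c i := by
      have := Finset.sum_le_sum hstep1
      have heq : ∑ i ∈ Finset.Icc 1 κ, (1 - ε * (L i)⁻¹)
          = (κ : ℝ) - ε * ∑ i ∈ Finset.Icc 1 κ, (L i)⁻¹ := by
        rw [Finset.sum_sub_distrib, Finset.sum_const, cardIcc, ← Finset.mul_sum]
        simp
      linarith
    have hb2 : L κ * ∑ j ∈ Finset.Icc (κ + 1) N, (L j)⁻¹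
        - ε * ∑ j ∈ Finset.Icc (κ + 1) N, (L j)⁻¹ ≤ ∑ j ∈ Finset.Icc (κ + 1) N, c j := by
      have := Finset.sum_le_sum hstep2
      have heq : ∑ j ∈ Finset.Icc (κ + 1) N, (L κ * (L j)⁻¹ - ε * (L j)⁻¹)
          = L κ * ∑ j ∈ Finset.Icc (κ + 1) N, (L j)⁻¹
            - ε * ∑ j ∈ Finset.Icc (κ + 1) N, (L j)⁻¹ := by
        rw [Finset.sum_sub_distrib, ← Finset.mul_sum, ← Finset.mul_sum]
      linarith
    have hsplitc := split_sum N κ hκN c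
    have hdistr : ε * (∑ i ∈ Finset.Icc 1 κ, (L i)⁻¹)
        + ε * (∑ j ∈ Finset.Icc (κ + 1) N, (L j)⁻¹) = ε * A := by
      rw [hA, split_sum N κ hκN (fun i => (L i)⁻¹)]; ring
    have hfin : Kt - ε * A ≤ K := by linarith
    linarith
  have hle : Vval N κ K L ≤ T - ε := by
    rw [vval_eq]
    refine csSup_le (VS_nonempty N κ K L hK0) ?_
    rintro v ⟨c, hc, rfl⟩
    exact key c hc
  linarith

lemma part3 (K : ℝ)
    (hK : (κ : ℝ) + L κ * ∑ j ∈ Finset.Icc (κ + 1) N, (L j)⁻¹ ≤ K) :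
    Vval N κ K L = ∑ i ∈ Finset.Icc 1 κ, L i := by
  have hKt0 : (0 : ℝ) ≤ (κ : ℝ) + L κ * ∑ j ∈ Finset.Icc (κ + 1) N, (L j)⁻¹ := by
    have h1 : (0:ℝ) ≤ ∑ j ∈ Finset.Icc (κ + 1) N, (L j)⁻¹ :=
      Finset.sum_nonneg fun j hj => by
        have := (Finset.mem_Icc.mp hj)
        exact (inv_pos.mpr (hLpos j (Finset.mem_Icc.mpr ⟨by omega, this.2⟩))).le
    have h2 : 0 < L κ := hLpos κ (Finset.mem_Icc.mpr ⟨hκ1, hκN⟩)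
    have h3 : (1:ℝ) ≤ (κ:ℝ) := by exact_mod_cast hκ1
    nlinarith
  rw [vval_eq]
  apply le_antisymm
  · exact csSup_le (VS_nonempty N κ K L (le_trans hKt0 hK)) (VS_le N κ K L hLpos hκN)
  · refine le_csSup (VS_bddAbove N κ K L hLpos hκN) ?_
    refine ⟨cstar κ L, ⟨cstar_bounds N L κ hLpos hLmono hκ1 hκN, ?_⟩,
      (vmin_cstar N L κ hLpos hLmono hκ1 hκN).symm⟩
    rw [cstar_budget N L κ hLpos hLmono hκ1 hκN]
    exact hK

lemma part1 (K1 K2 : ℝ) (hK1 : 0 ≤ K1) (h12 : K1 ≤ K2) :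
    Vval N κ K1 L ≤ Vval N κ K2 L := by
  rw [vval_eq, vval_eq]
  refine csSup_le_csSup (VS_bddAbove N κ K2 L hLpos hκN) (VS_nonempty N κ K1 L hK1) ?_
  rintro v ⟨c, ⟨hb, hs⟩, rfl⟩
  exact ⟨c, ⟨hb, le_trans hs h12⟩, rfl⟩

lemma part2 (K1 K2 : ℝ) (hK1 : 0 ≤ K1) (h12 : K1 < K2)
    (hK2 : K2 ≤ (κ : ℝ) + L κ * ∑ j ∈ Finset.Icc (κ + 1) N, (L j)⁻¹) :
    Vval N κ K1 L < Vval N κ K2 L := by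
  set T := ∑ i ∈ Finset.Icc 1 κ, L i with hT
  set Kt := (κ : ℝ) + L κ * ∑ j ∈ Finset.Icc (κ + 1) N, (L j)⁻¹ with hKt
  rcases eq_or_lt_of_le hK2 with hEq | hlt
  · -- K2 = Kt
    have h3 := part3 N hN L hLpos hLmono κ hκ1 hκN K2 (le_of_eq hEq.symm)
    have h4 := part4 N hN L hLpos hLmono κ hκ1 hκN K1 hK1 (by rw [← hKt]; linarith)
    rw [h3]; rw [← hT] at h4; exact h4
  · -- K2 < Kt
    set t := (Kt - K2) / (Kt - K1) with ht
    have hd : 0 < Kt - K1 := by linarith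
    have ht0 : 0 < t := div_pos (by linarith) hd
    have ht1 : t < 1 := (div_lt_one hd).mpr (by linarith)
    have htK : t * K1 + (1 - t) * Kt = K2 := by
      rw [ht]; field_simp; ring
    have hcb := cstar_bounds N L κ hLpos hLmono hκ1 hκN
    have hcs : ∑ i ∈ Finset.Icc 1 N, cstar κ L i = Kt := by
      rw [hKt]; exact cstar_budget N L κ hLpos hLmono hκ1 hκN
    have hvcs := vmin_cstar N L κ hLpos hLmono hκ1 hκN
    rw [← hT] at hvcs
    clear_value T Kt t
    have claim : ∀ v ∈ VS N κ K1 L, t * v + (1 - t) * T ≤ Vval N κ K2 L := by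
      rintro v ⟨c1, ⟨hc1b, hc1s⟩, rfl⟩
      set c : ℕ → ℝ := fun i => t * c1 i + (1 - t) * cstar κ L i with hc
      have hDc : Dmem N K2 c := by
        constructor
        · intro i hi
          obtain ⟨h1, h2⟩ := hc1b i hi
          obtain ⟨h3, h4⟩ := hcb i hi
          constructor
          · simp only [hc]; nlinarith
          · simp only [hc]; nlinarith
        · have : ∑ i ∈ Finset.Icc 1 N, c i
              = t * ∑ i ∈ Finset.Icc 1 N, c1 i + (1 - t) * ∑ i ∈ Finset.Icc 1 N, cstar κ L i := by
            rw [Finset.mul_sum, Finset.mul_sum, ← Finset.sum_add_distrib]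
          rw [this, hcs]
          nlinarith
      have hVminc : t * Vmin N κ L c1 + (1 - t) * T ≤ Vmin N κ L c := by
        refine le_csInf (S_nonempty N κ hκN L c) ?_
        rintro x ⟨U, hU, hcard, rfl⟩
        have hx : ∑ i ∈ U, c i * L i
            = t * ∑ i ∈ U, c1 i * L i + (1 - t) * ∑ i ∈ U, cstar κ L i * L i := by
          rw [Finset.mul_sum, Finset.mul_sum, ← Finset.sum_add_distrib]
          exact Finset.sum_congr rfl fun i _ => by simp only [hc]; ring
        have h1 : Vmin N κ L c1 ≤ ∑ i ∈ U, c1 i * L i :=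
          vmin_le_elem N κ L c1 (fun i hi => (hc1b i hi).1) hLpos U hU hcard
        have h2 : T ≤ ∑ i ∈ U, cstar κ L i * L i := by
          rw [← hvcs]
          exact vmin_le_elem N κ L _ (fun i hi => (hcb i hi).1) hLpos U hU hcard
        rw [hx]
        have ha := mul_le_mul_of_nonneg_left h1 ht0.le
        have hb := mul_le_mul_of_nonneg_left h2 (by linarith : (0:ℝ) ≤ 1 - t)
        linarith
      calc t * Vmin N κ L c1 + (1 - t) * T ≤ Vmin N κ L c := hVminc
        _ ≤ Vval N κ K2 L := le_csSup (VS_bddAbove N κ K2 L hLpos hκN) ⟨c, hDc, rfl⟩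
    have hub : Vval N κ K1 L ≤ (Vval N κ K2 L - (1 - t) * T) / t := by
      rw [vval_eq]
      refine csSup_le (VS_nonempty N κ K1 L hK1) fun v hv => ?_
      rw [le_div_iff₀ ht0]
      have := claim v hv
      linarith
    have h4 := part4 N hN L hLpos hLmono κ hκ1 hκN K1 hK1 (by rw [← hKt]; linarith)
    rw [← hT] at h4
    have h5 : t * Vval N κ K1 L ≤ Vval N κ K2 L - (1 - t) * T := by
      have := (le_div_iff₀ ht0).mp hub
      linarith
    nlinarith

theorem stmt_6' (Ktilde : ℝ)
    (hKtd : Ktilde = (κ : ℝ) + L κ * ∑ j ∈ Finset.Icc (κ + 1) N, (L j)⁻¹) :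
    (∀ K1 K2 : ℝ, 0 ≤ K1 → K1 ≤ K2 → Vval N κ K1 L ≤ Vval N κ K2 L) ∧
    (∀ K1 K2 : ℝ, 0 ≤ K1 → K1 < K2 → K2 ≤ Ktilde → Vval N κ K1 L < Vval N κ K2 L) ∧
    (∀ K : ℝ, Ktilde ≤ K → Vval N κ K L = ∑ i ∈ Finset.Icc 1 κ, L i) ∧
    (∀ K : ℝ, 0 ≤ K → K < Ktilde → Vval N κ K L < ∑ i ∈ Finset.Icc 1 κ, L i) := by
  subst hKtd
  exact ⟨fun K1 K2 h1 h2 => part1 N hN L hLpos hLmono κ hκ1 hκN K1 K2 h1 h2,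
    fun K1 K2 h1 h2 h3 => part2 N hN L hLpos hLmono κ hκ1 hκN K1 K2 h1 h2 h3,
    fun K h => part3 N hN L hLpos hLmono κ hκ1 hκN K h,
    fun K h1 h2 => part4 N hN L hLpos hLmono κ hκ1 hκN K h1 h2⟩

end Main

end Stmt6


/-- with `K̃ := κ + L_κ ∑_{j=κ+1}^N 1/L_j`, the map `K ↦ V(κ,K,L)` is
nondecreasing on `[0,∞)`, strictly increasing on `[0,K̃]`, constant equal to `∑_{i=1}^κ L_i`
on `[K̃,∞)`, and in particular `V(κ,K,L) < ∑_{i=1}^κ L_i` whenever `0 ≤ K < K̃`. -/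
theorem stmt_6 (N : ℕ) (hN : 1 ≤ N) (L : ℕ → ℝ)
    (hLpos : ∀ i ∈ Finset.Icc 1 N, 0 < L i)
    (hLmono : ∀ i j : ℕ, 1 ≤ i → i ≤ j → j ≤ N → L i ≤ L j)
    (κ : ℕ) (hκ1 : 1 ≤ κ) (hκN : κ ≤ N)
    (Ktilde : ℝ) (hKt : Ktilde = (κ : ℝ) + L κ * ∑ j ∈ Finset.Icc (κ + 1) N, (L j)⁻¹) :
    (∀ K1 K2 : ℝ, 0 ≤ K1 → K1 ≤ K2 → Vval N κ K1 L ≤ Vval N κ K2 L) ∧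
    (∀ K1 K2 : ℝ, 0 ≤ K1 → K1 < K2 → K2 ≤ Ktilde → Vval N κ K1 L < Vval N κ K2 L) ∧
    (∀ K : ℝ, Ktilde ≤ K → Vval N κ K L = ∑ i ∈ Finset.Icc 1 κ, L i) ∧
    (∀ K : ℝ, 0 ≤ K → K < Ktilde → Vval N κ K L < ∑ i ∈ Finset.Icc 1 κ, L i) := by
  exact Stmt6.stmt_6' N hN L hLpos hLmono κ hκ1 hκN Ktilde hKt
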